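/- For positive integers n, k with 0 ≤ k ≤ n and every natural number m, ∑_{j=0}^{k} (-1)^j C(k,j) C((n-j)(m+1), n) = ∑ over weak compositions (a_1,…,a_n) of n with a_1,…,a_k ≥ 1 of ∏_{i=1}^{n} C(m+1, a_i). -/

import Mathlib

open Finset PowerSeries
open Fin.NatCast

lemma coeff_onepX_pow (N d : ℕ) :
    PowerSeries.coeff (R := ℤ) d ((1 + PowerSeries.X) ^ N : PowerSeries ℤ) = N.choose d := by
  have h : ((1 + Polynomial.X : Polynomial ℤ) : PowerSeries ℤ) = 1 + PowerSeries.X := by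
    simp
  rw [← h, ← Polynomial.coe_pow, Polynomial.coeff_coe, Polynomial.coeff_one_add_X_pow]

lemma lhs_eq (n k m : ℕ) (hk : k ≤ n) :
    (∑ j ∈ Finset.range (k + 1),
        (-1) ^ j * (k.choose j : ℤ) * (((n - j) * (m + 1)).choose n : ℤ)) =
    PowerSeries.coeff (R := ℤ) n
      ((((1 + PowerSeries.X) ^ (m + 1) - 1) ^ k) *
        (1 + PowerSeries.X) ^ ((n - k) * (m + 1)) : PowerSeries ℤ) := by
  rw [sub_pow, Finset.sum_mul, map_sum]
  rw [← Finset.sum_range_reflect]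
  apply Finset.sum_congr rfl
  intro j hj
  rw [Finset.mem_range] at hj
  have hj' : j ≤ k := by omega
  have h1 : k + 1 - 1 - j = k - j := by omega
  rw [h1]
  have h2 : (-1 : PowerSeries ℤ) ^ (j + k) * ((1 + PowerSeries.X) ^ (m + 1)) ^ j * 1 ^ (k - j) *
        (k.choose j : PowerSeries ℤ) * (1 + PowerSeries.X) ^ ((n - k) * (m + 1))
      = PowerSeries.C (R := ℤ) ((-1) ^ (j + k) * (k.choose j : ℤ)) *
        (1 + PowerSeries.X) ^ ((n - (k - j)) * (m + 1)) := by
    rw [one_pow, mul_one, ← pow_mul]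
    have h3 : j * (m + 1) + (n - k) * (m + 1) = (n - (k - j)) * (m + 1) := by
      rw [← add_mul]; congr 1; omega
    rw [← h3, pow_add, map_mul, map_pow, map_neg, map_one, map_natCast]
    ring
  rw [h2, PowerSeries.coeff_C_mul, coeff_onepX_pow]
  have hsign : ((-1 : ℤ)) ^ (j + k) = (-1) ^ (k - j) := by
    rw [show j + k = (k - j) + 2 * j by omega, pow_add]
    simp [pow_mul]
  rw [hsign, Nat.choose_symm hj']

lemma card_filter_lt (n k : ℕ) (hk : k ≤ n) :
    (Finset.univ.filter fun i : Fin n => (i : ℕ) < k).card = k := by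
  have h : (Finset.univ.filter fun i : Fin n => (i : ℕ) < k)
      = Finset.map (Fin.castLEEmb hk) Finset.univ := by
    ext i
    simp only [Finset.mem_filter, Finset.mem_univ, true_and, Finset.mem_map]
    constructor
    · intro h; exact ⟨⟨i, h⟩, rfl⟩
    · rintro ⟨j, rfl⟩; exact j.2
  rw [h, Finset.card_map, Finset.card_univ, Fintype.card_fin]

lemma card_filter_not_lt (n k : ℕ) (hk : k ≤ n) :
    (Finset.univ.filter fun i : Fin n => ¬ (i : ℕ) < k).card = n - k := by
  have := Finset.card_filter_add_card_filter_not (s := (Finset.univ : Finset (Fin n)))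
    (p := fun i : Fin n => (i : ℕ) < k)
  rw [card_filter_lt n k hk, Finset.card_univ, Fintype.card_fin] at this
  omega

theorem stmt_11 (n k m : ℕ) (hn : 0 < n) (hk : k ≤ n) :
    (∑ j ∈ Finset.range (k + 1),
        (-1) ^ j * (k.choose j : ℤ) * (((n - j) * (m + 1)).choose n : ℤ)) =
      ∑ a ∈ Finset.univ.filter
          (fun a : Fin n → Fin (n + 1) =>
            (∑ i, (a i : ℕ)) = n ∧ ∀ i : Fin n, (i : ℕ) < k → 1 ≤ (a i : ℕ)),
        ∏ i, ((m + 1).choose (a i) : ℤ) := by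
  rw [lhs_eq n k m hk]
  set P : PowerSeries ℤ := (1 + PowerSeries.X) ^ (m + 1) with hP
  have hpow : (1 + PowerSeries.X : PowerSeries ℤ) ^ ((n - k) * (m + 1)) = P ^ (n - k) := by
    rw [hP, ← pow_mul, mul_comm]
  rw [hpow]
  have hprod : (P - 1) ^ k * P ^ (n - k)
      = ∏ i : Fin n, (if (i : ℕ) < k then P - 1 else P) := by
    rw [Finset.prod_ite, Finset.prod_const, Finset.prod_const,
      card_filter_lt n k hk, card_filter_not_lt n k hk]
  rw [hprod, PowerSeries.coeff_prod]
  rw [← Finset.sum_filter_add_sum_filter_not _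
    (fun l : Fin n →₀ ℕ => ∀ i : Fin n, (i : ℕ) < k → l i ≠ 0)]
  have hz : ∑ l ∈ (Finset.finsuppAntidiag Finset.univ n).filter
      (fun l : Fin n →₀ ℕ => ¬ ∀ i : Fin n, (i : ℕ) < k → l i ≠ 0),
      ∏ i : Fin n, PowerSeries.coeff (R := ℤ) (l i) (if (i : ℕ) < k then P - 1 else P) = 0 := by
    apply Finset.sum_eq_zero
    intro l hl
    rw [Finset.mem_filter] at hl
    push_neg at hl
    obtain ⟨i0, hi0k, hi00⟩ := hl.2
    apply Finset.prod_eq_zero (Finset.mem_univ i0)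
    rw [if_pos hi0k, hi00, map_sub, hP, coeff_onepX_pow, PowerSeries.coeff_one]
    simp
  rw [hz, add_zero]
  have hcongr : ∀ l ∈ (Finset.finsuppAntidiag Finset.univ n).filter
      (fun l : Fin n →₀ ℕ => ∀ i : Fin n, (i : ℕ) < k → l i ≠ 0),
      (∏ i : Fin n, PowerSeries.coeff (R := ℤ) (l i) (if (i : ℕ) < k then P - 1 else P))
      = ∏ i : Fin n, ((m + 1).choose (l i) : ℤ) := by
    intro l hl
    rw [Finset.mem_filter] at hl
    apply Finset.prod_congr rfl
    intro i _
    by_cases hik : (i : ℕ) < k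
    · rw [if_pos hik, map_sub, hP, coeff_onepX_pow, PowerSeries.coeff_one,
        if_neg (hl.2 i hik)]
      ring
    · rw [if_neg hik, hP, coeff_onepX_pow]
  rw [Finset.sum_congr rfl hcongr]
  -- now the bijection
  have hsum : ∀ l ∈ Finset.univ.finsuppAntidiag n, ∀ i : Fin n, l i ≤ n := by
    intro l hl i
    rw [Finset.mem_finsuppAntidiag] at hl
    have h := Finset.single_le_sum (f := fun j => l j) (fun _ _ => Nat.zero_le _) (Finset.mem_univ i)
    rw [hl.1] at h
    exact h
  apply Finset.sum_nbij' (i := fun l : Fin n →₀ ℕ => fun i : Fin n => ((l i : ℕ) : Fin (n + 1)))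
    (j := fun a : Fin n → Fin (n + 1) => Finsupp.equivFunOnFinite.symm (fun i => (a i : ℕ)))
  · intro l hl
    rw [Finset.mem_filter] at hl ⊢
    refine ⟨Finset.mem_univ _, ?_, ?_⟩
    · have h1 := (Finset.mem_finsuppAntidiag.mp hl.1).1
      have h2 : (∑ i : Fin n, ((((l i : ℕ)) : Fin (n + 1)) : ℕ)) = Finset.univ.sum ⇑l :=
        Finset.sum_congr rfl fun i _ =>
          Fin.val_cast_of_lt (Nat.lt_succ_of_le (hsum l hl.1 i))
      exact h2.trans h1
    · intro i hik
      have h2 := hl.2 i hik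
      rw [Fin.val_cast_of_lt (Nat.lt_succ_of_le (hsum l hl.1 i))]
      omega
  · intro a ha
    rw [Finset.mem_filter] at ha ⊢
    constructor
    · rw [Finset.mem_finsuppAntidiag]
      constructor
      · have h2 : Finset.univ.sum ⇑(Finsupp.equivFunOnFinite.symm fun i => ((a i : ℕ)))
            = ∑ i : Fin n, (a i : ℕ) := Finset.sum_congr rfl fun i _ => by simp
        exact h2.trans ha.2.1
      · intro i _
        exact Finset.mem_univ i
    · intro i hik
      have h3 := ha.2.2 i hik
      simp only [Finsupp.coe_equivFunOnFinite_symm]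
      omega
  · intro l hl
    rw [Finset.mem_filter] at hl
    ext i
    simp only [Finsupp.coe_equivFunOnFinite_symm]
    exact Fin.val_cast_of_lt (Nat.lt_succ_of_le (hsum l hl.1 i))
  · intro a ha
    funext i
    simp [Fin.cast_val_eq_self]
  · intro l hl
    rw [Finset.mem_filter] at hl
    apply Finset.prod_congr rfl
    intro i _
    rw [Fin.val_cast_of_lt (Nat.lt_succ_of_le (hsum l hl.1 i))]
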